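/- Deterministic reach-avoid within a finite horizon: Let X ⊆ ℝⁿ be open and bounded, Xs ⊆ X closed, T > 0, M ≥ 0, and γ : [0,T] → ℝⁿ a continuous path with γ(0) ∈ X \ Xs. Let v, w : [0,T] × ℝⁿ → ℝ be continuous with |w(t,x)| ≤ M for all (t,x) ∈ [0,T] × cl(X). Assume: (i) t ↦ v(t, γ(t)) is nondecreasing on any subinterval on which γ stays in X \ Xs; (ii) for each x ∈ ∂X ∪ ∂Xs, t ↦ v(t,x) is nondecreasing; (iii) v(t, γ(t)) ≤ d/dt[w(t, γ(t))] whenever γ(t) ∈ X \ Xs; (iv) v(t,x) ≤ ∂w/∂t(t,x) for all x ∈ ∂X and t ∈ [0,T]; and (v) v(0, γ(0)) > 2M/T. Then there exists t ∈ [0,T] with γ(t) ∈ Xs and γ(τ) ∈ X for all τ ∈ [0,t). -/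

import Mathlib

lemma incr_aux (f f' : ℝ → ℝ) {a b : ℝ} (c : ℝ) (hab : a ≤ b)
    (hcont : ContinuousOn f (Set.Icc a b))
    (hderiv : ∀ t ∈ Set.Ioo a b, HasDerivAt f (f' t) t)
    (hge : ∀ t ∈ Set.Ioo a b, c ≤ f' t) :
    c * (b - a) ≤ f b - f a := by
  set g : ℝ → ℝ := fun t => f t - c * t with hg
  have hmono : MonotoneOn g (Set.Icc a b) := by
    apply monotoneOn_of_deriv_nonneg (convex_Icc a b)
      (hcont.sub ((continuous_const.mul continuous_id).continuousOn))
    · intro x hx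
      rw [interior_Icc] at hx
      exact ((hderiv x hx).sub ((hasDerivAt_id x).const_mul c)).differentiableAt.differentiableWithinAt
    · intro x hx
      rw [interior_Icc] at hx
      have h := ((hderiv x hx).sub ((hasDerivAt_id x).const_mul c)).deriv
      rw [show (f - (fun x => c) * id) = (f - fun y => c * id y) from rfl, h]
      have := hge x hx
      simp only [mul_one]
      linarith
  have := hmono (Set.left_mem_Icc.mpr hab) (Set.right_mem_Icc.mpr hab) hab
  simp only [g] at this
  nlinarith

theorem deterministic_reach_avoid_within_horizon
    {n : ℕ} (X Xs : Set (Fin n → ℝ)) (hX : IsOpen X)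
    (hXbd : Bornology.IsBounded X) (hXs : IsClosed Xs) (hsub : Xs ⊆ X)
    (T M : ℝ) (hT : 0 < T) (hM : 0 ≤ M)
    (γ : ℝ → (Fin n → ℝ)) (hγ : Continuous γ) (h0 : γ 0 ∈ X \ Xs)
    (v w : ℝ → (Fin n → ℝ) → ℝ)
    (hv : Continuous fun p : ℝ × (Fin n → ℝ) => v p.1 p.2)
    (hw : Continuous fun p : ℝ × (Fin n → ℝ) => w p.1 p.2)
    (hwbd : ∀ t ∈ Set.Icc (0:ℝ) T, ∀ x ∈ closure X, |w t x| ≤ M)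
    (hi : ∀ a b : ℝ, 0 ≤ a → a ≤ b → b ≤ T →
      (∀ τ ∈ Set.Icc a b, γ τ ∈ X \ Xs) → v a (γ a) ≤ v b (γ b))
    (hii : ∀ x ∈ frontier X ∪ frontier Xs,
      ∀ s t : ℝ, 0 ≤ s → s ≤ t → t ≤ T → v s x ≤ v t x)
    (W' : ℝ → ℝ)
    (hiii : ∀ t ∈ Set.Icc (0:ℝ) T, γ t ∈ X \ Xs →
      HasDerivAt (fun s => w s (γ s)) (W' t) t ∧ v t (γ t) ≤ W' t)
    (wt : ℝ → (Fin n → ℝ) → ℝ)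
    (hivd : ∀ x ∈ frontier X, ∀ t ∈ Set.Icc (0:ℝ) T,
      HasDerivAt (fun s => w s x) (wt t x) t ∧ v t x ≤ wt t x)
    (hv0 : 2 * M / T < v 0 (γ 0)) :
    ∃ t ∈ Set.Icc (0:ℝ) T, γ t ∈ Xs ∧ ∀ τ ∈ Set.Ico (0:ℝ) t, γ τ ∈ X := by
  set v0 := v 0 (γ 0) with hv0def
  have hv0T : 2 * M < v0 * T := by
    rw [div_lt_iff₀ hT] at hv0
    linarith
  have hwγcont : Continuous fun s => w s (γ s) := hw.comp (continuous_id.prodMk hγ)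
  have hvγcont : Continuous fun s => v s (γ s) := hv.comp (continuous_id.prodMk hγ)
  -- the "bad" time set
  set S : Set ℝ := Set.Icc 0 T ∩ γ ⁻¹' (X \ Xs)ᶜ with hSdef
  have hSclosed : IsClosed S :=
    isClosed_Icc.inter ((hX.sdiff hXs).preimage hγ).isClosed_compl
  by_cases hS : S.Nonempty
  · -- first exit/hit time
    have hbdd : BddBelow S := ⟨0, fun t ht => ht.1.1⟩
    set t₀ := sInf S with ht₀def
    have ht₀S : t₀ ∈ S := hSclosed.csInf_mem hS hbdd
    have ht₀Icc : t₀ ∈ Set.Icc (0:ℝ) T := ht₀S.1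
    have ht₀pos : 0 < t₀ := by
      rcases lt_or_eq_of_le ht₀Icc.1 with h | h
      · exact h
      · exfalso; exact ht₀S.2 (by rw [← h]; exact h0)
    have hbefore : ∀ τ ∈ Set.Ico (0:ℝ) t₀, γ τ ∈ X \ Xs := by
      intro τ hτ
      by_contra hc
      exact absurd (csInf_le hbdd ⟨⟨hτ.1, le_trans hτ.2.le ht₀Icc.2⟩, hc⟩) (not_le.mpr hτ.2)
    by_cases hhit : γ t₀ ∈ Xs
    · exact ⟨t₀, ht₀Icc, hhit, fun τ hτ => (hbefore τ hτ).1⟩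
    · exfalso
      have hnotX : γ t₀ ∉ X := fun h => ht₀S.2 ⟨h, hhit⟩
      set x := γ t₀ with hxdef
      have ht₀cl : t₀ ∈ closure (Set.Ico (0:ℝ) t₀) := by
        rw [closure_Ico (ne_of_lt ht₀pos)]
        exact Set.right_mem_Icc.mpr ht₀pos.le
      have hxcl : x ∈ closure X := by
        have h1 : x ∈ closure (γ '' Set.Ico 0 t₀) :=
          hγ.continuousWithinAt.mem_closure_image ht₀cl
        refine closure_mono ?_ h1
        rintro y ⟨τ, hτ, rfl⟩
        exact (hbefore τ hτ).1
      have hxfr : x ∈ frontier X := by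
        rw [hX.frontier_eq]
        exact ⟨hxcl, hnotX⟩
      -- v0 ≤ v τ (γ τ) on [0, t₀)
      have hvlow : ∀ τ ∈ Set.Ico (0:ℝ) t₀, v0 ≤ v τ (γ τ) := by
        intro τ hτ
        exact hi 0 τ le_rfl hτ.1 (le_trans hτ.2.le ht₀Icc.2)
          (fun s hs => hbefore s ⟨hs.1, lt_of_le_of_lt hs.2 hτ.2⟩)
      -- v0 ≤ v t₀ x by continuity
      have hvt₀ : v0 ≤ v t₀ x := by
        have hclosedset : IsClosed {τ : ℝ | v0 ≤ v τ (γ τ)} :=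
          isClosed_le continuous_const hvγcont
        have : Set.Ico (0:ℝ) t₀ ⊆ {τ : ℝ | v0 ≤ v τ (γ τ)} := hvlow
        exact hclosedset.closure_subset (closure_mono this ht₀cl)
      -- increment on [0, t₀]
      have hinc1 : v0 * (t₀ - 0) ≤ w t₀ (γ t₀) - w 0 (γ 0) := by
        apply incr_aux _ W' _ ht₀pos.le hwγcont.continuousOn
        · intro t ht
          have htIcc : t ∈ Set.Icc (0:ℝ) T := ⟨ht.1.le, le_trans ht.2.le ht₀Icc.2⟩
          exact (hiii t htIcc (hbefore t ⟨ht.1.le, ht.2⟩)).1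
        · intro t ht
          have htIcc : t ∈ Set.Icc (0:ℝ) T := ⟨ht.1.le, le_trans ht.2.le ht₀Icc.2⟩
          exact le_trans (hvlow t ⟨ht.1.le, ht.2⟩) (hiii t htIcc (hbefore t ⟨ht.1.le, ht.2⟩)).2
      -- increment on [t₀, T]
      have hinc2 : v0 * (T - t₀) ≤ w T x - w t₀ x := by
        apply incr_aux _ (fun s => wt s x) _ ht₀Icc.2
          ((hw.comp (continuous_id.prodMk continuous_const)).continuousOn)
        · intro t ht
          exact (hivd x hxfr t ⟨le_trans ht₀Icc.1 ht.1.le, ht.2.le⟩).1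
        · intro t ht
          have htIcc : t ∈ Set.Icc (0:ℝ) T := ⟨le_trans ht₀Icc.1 ht.1.le, ht.2.le⟩
          refine le_trans ?_ (hivd x hxfr t htIcc).2
          exact le_trans hvt₀ (hii x (Or.inl hxfr) t₀ t ht₀Icc.1 ht.1.le ht.2.le)
      have hb1 := hwbd T ⟨hT.le, le_rfl⟩ x hxcl
      have hb2 := hwbd 0 ⟨le_rfl, hT.le⟩ (γ 0) (subset_closure h0.1)
      rw [abs_le] at hb1 hb2
      have : w t₀ (γ t₀) = w t₀ x := rfl
      nlinarith [hb1.1, hb1.2, hb2.1, hb2.2]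
  · -- γ stays in X \ Xs on all of [0,T]: contradiction
    exfalso
    push_neg at hS
    have hall : ∀ t ∈ Set.Icc (0:ℝ) T, γ t ∈ X \ Xs := by
      intro t ht
      by_contra hc
      have : t ∈ S := ⟨ht, hc⟩
      rw [hS] at this
      exact this
    have hinc : v0 * (T - 0) ≤ w T (γ T) - w 0 (γ 0) := by
      apply incr_aux _ W' _ hT.le hwγcont.continuousOn
      · intro t ht
        exact (hiii t ⟨ht.1.le, ht.2.le⟩ (hall t ⟨ht.1.le, ht.2.le⟩)).1
      · intro t ht
        have htIcc : t ∈ Set.Icc (0:ℝ) T := ⟨ht.1.le, ht.2.le⟩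
        refine le_trans ?_ (hiii t htIcc (hall t htIcc)).2
        exact hi 0 t le_rfl ht.1.le ht.2.le
          (fun s hs => hall s ⟨hs.1, le_trans hs.2 ht.2.le⟩)
    have hb1 := hwbd T ⟨hT.le, le_rfl⟩ (γ T) (subset_closure (hall T ⟨hT.le, le_rfl⟩).1)
    have hb2 := hwbd 0 ⟨le_rfl, hT.le⟩ (γ 0) (subset_closure h0.1)
    rw [abs_le] at hb1 hb2
    nlinarith [hb1.1, hb1.2, hb2.1, hb2.2]
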